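/- For all integers n ≥ 0, i ≥ 1, and α ≥ 0, ā_{2i}(2^α · (4n + 3)) ≡ 0 (mod 4). -/

import Mathlib

/-- `fk k` is the infinite product `∏_{n ≥ 1} (1 - q^{k n})` in `ℤ[[q]]`, defined
coefficientwise via stable partial products. -/
noncomputable def fk (k : ℕ) : PowerSeries ℤ :=
  PowerSeries.mk fun n =>
    PowerSeries.coeff n
      (∏ m ∈ Finset.Icc 1 (n + 1), (1 - (PowerSeries.X : PowerSeries ℤ) ^ (k * m)))

namespace OC

open PowerSeries Finset

abbrev PS := PowerSeries ℤ

/-- congruence modulo X^(n+1) -/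
def Emod (n : ℕ) (F G : PS) : Prop := (X : PS)^(n+1) ∣ F - G

lemma emod_iff {n : ℕ} {F G : PS} :
    Emod n F G ↔ ∀ m ≤ n, coeff m F = coeff m G := by
  unfold Emod
  rw [PowerSeries.X_pow_dvd_iff]
  constructor
  · intro h m hm
    have := h m (by omega)
    rw [map_sub, sub_eq_zero] at this
    exact this
  · intro h m hm
    rw [map_sub, sub_eq_zero]
    exact h m (by omega)

lemma Emod.refl (n : ℕ) (F : PS) : Emod n F F := by simp [Emod]

lemma Emod.symm {n : ℕ} {F G : PS} (h : Emod n F G) : Emod n G F := by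
  rw [Emod, ← neg_sub F G]
  exact dvd_neg.mpr h

lemma Emod.trans {n : ℕ} {F G H : PS} (h1 : Emod n F G) (h2 : Emod n G H) :
    Emod n F H := by
  have := dvd_add h1 h2
  simpa [Emod, sub_add_sub_cancel] using this

lemma Emod.mul {n : ℕ} {F G H K : PS} (h1 : Emod n F G) (h2 : Emod n H K) :
    Emod n (F * H) (G * K) := by
  have : F * H - G * K = F * (H - K) + (F - G) * K := by ring
  rw [Emod, this]
  exact dvd_add (Dvd.dvd.mul_left h2 F) (Dvd.dvd.mul_right h1 K)

lemma Emod.of_le {n n' : ℕ} {F G : PS} (h : Emod n F G) (hle : n' ≤ n) :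
    Emod n' F G :=
  dvd_trans (pow_dvd_pow _ (by omega)) h

lemma Emod.sum {n : ℕ} {s : Finset ℕ} {f g : ℕ → PS}
    (h : ∀ k ∈ s, Emod n (f k) (g k)) :
    Emod n (∑ k ∈ s, f k) (∑ k ∈ s, g k) := by
  rw [Emod, ← Finset.sum_sub_distrib]
  exact Finset.dvd_sum h

lemma Emod.xpow_mul {t e n : ℕ} {A B : PS} (h : Emod t A B) (he : e + t = n) :
    Emod n ((X:PS)^e * A) ((X:PS)^e * B) := by
  rw [Emod, ← mul_sub]
  subst he
  have h2 : (X:PS)^(e + t + 1) = (X:PS)^e * (X:PS)^(t+1) := by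
    rw [← pow_add, Nat.add_assoc]
  rw [h2]
  exact mul_dvd_mul dvd_rfl h

lemma Emod.const_mul {n : ℕ} {A B : PS} (c : PS) (h : Emod n A B) :
    Emod n (c * A) (c * B) := by
  rw [Emod, ← mul_sub]
  exact Dvd.dvd.mul_left h c

lemma emod_of_xpow_dvd {n : ℕ} {A B : PS} (h1 : (X:PS)^(n+1) ∣ A)
    (h2 : (X:PS)^(n+1) ∣ B) : Emod n A B := dvd_sub h1 h2

/-- partial products -/
noncomputable def pp (k M : ℕ) : PS := ∏ m ∈ Ioc 0 M, (1 - (X:PS)^(k*m))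

lemma coeff_fk (k n : ℕ) : coeff n (fk k) = coeff n (pp k (n+1)) := by
  rw [fk, coeff_mk, pp, ← Finset.Icc_add_one_left_eq_Ioc, zero_add]

lemma pp_succ (k M : ℕ) : pp k (M+1) = pp k M * (1 - (X:PS)^(k*(M+1))) :=
  Finset.prod_Ioc_succ_top (Nat.zero_le M) _

lemma emod_mul_one_sub {n j : ℕ} (A : PS) (hj : n + 1 ≤ j) :
    Emod n (A * (1 - (X:PS)^j)) A := by
  have : A * (1 - (X:PS)^j) - A = -((X:PS)^j * A) := by ring
  rw [Emod, this]
  exact dvd_neg.mpr (Dvd.dvd.mul_right (pow_dvd_pow _ hj) A)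

lemma pp_stable {k n M : ℕ} (hk : 1 ≤ k) (hM : n + 1 ≤ M) :
    Emod n (pp k M) (pp k (n+1)) := by
  induction M, hM using Nat.le_induction with
  | base => exact Emod.refl _ _
  | succ M hM ih =>
      rw [pp_succ]
      refine Emod.trans ?_ ih
      refine emod_mul_one_sub _ ?_
      calc n + 1 ≤ M + 1 := by omega
        _ ≤ k * (M+1) := Nat.le_mul_of_pos_left _ hk

lemma fk_emod {k n M : ℕ} (hk : 1 ≤ k) (hM : n + 1 ≤ M) :
    Emod n (fk k) (pp k M) := by
  rw [emod_iff]
  intro m hm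
  rw [coeff_fk]
  have h1 : Emod m (pp k M) (pp k (m+1)) := pp_stable hk (by omega)
  exact ((emod_iff.1 h1) m le_rfl).symm

/-- substitution X -> X^2, coefficientwise -/
noncomputable def Dbl (F : PS) : PS :=
  PowerSeries.mk fun m => if 2 ∣ m then coeff (m/2) F else 0

lemma coeff_Dbl_even (F : PS) (m : ℕ) : coeff (2*m) (Dbl F) = coeff m F := by
  simp [Dbl, coeff_mk, Nat.mul_div_cancel_left _ (by norm_num : 0 < 2)]

lemma coeff_Dbl_odd (F : PS) {m : ℕ} (h : ¬ 2 ∣ m) : coeff m (Dbl F) = 0 := by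
  simp [Dbl, coeff_mk, h]

lemma sum_range_parity (f : ℕ → ℤ) (s : ℕ) :
    ∑ j ∈ range s, f j
      = (∑ j ∈ range ((s+1)/2), f (2*j)) + ∑ j ∈ range (s/2), f (2*j+1) := by
  induction s with
  | zero => simp
  | succ s ih =>
      rw [Finset.sum_range_succ, ih]
      rcases Nat.even_or_odd s with ⟨t, rfl⟩ | ⟨t, rfl⟩
      · have h1 : (t + t + 1 + 1)/2 = t + 1 := by omega
        have h2 : (t + t + 1)/2 = t := by omega
        have h3 : (t + t)/2 = t := by omega
        have h4 : t + t = 2 * t := by omega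
        rw [h1, h2, h3, Finset.sum_range_succ (f := fun j => f (2*j)), h4]
        ring
      · have h1 : (2*t + 1 + 1 + 1)/2 = t + 1 := by omega
        have h2 : (2*t + 1 + 1)/2 = t + 1 := by omega
        have h3 : (2*t + 1)/2 = t := by omega
        rw [h1, h2, h3, Finset.sum_range_succ (f := fun j => f (2*j+1))]
        ring

lemma Dbl_mul (F G : PS) : Dbl (F * G) = Dbl F * Dbl G := by
  ext m
  rw [coeff_mul, Finset.Nat.sum_antidiagonal_eq_sum_range_succ_mk]
  rcases Nat.even_or_odd m with ⟨t, htm⟩ | ⟨t, htm⟩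
  · have htm' : m = 2*t := by omega
    subst htm'
    rw [coeff_Dbl_even, coeff_mul, Finset.Nat.sum_antidiagonal_eq_sum_range_succ_mk,
      sum_range_parity (fun k => coeff k (Dbl F) * coeff (2*t - k) (Dbl G)) (2*t+1)]
    have h1 : (2*t+1+1)/2 = t+1 := by omega
    have h2 : (2*t+1)/2 = t := by omega
    rw [h1, h2]
    have h3 : ∀ j ∈ range t, coeff (2*j+1) (Dbl F) * coeff (2*t - (2*j+1)) (Dbl G) = 0 := by
      intro j hj
      rw [coeff_Dbl_odd F (by omega)]
      ring
    rw [Finset.sum_congr rfl h3, Finset.sum_const_zero, add_zero]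
    refine Finset.sum_congr rfl ?_
    intro j hj
    have hj' : j ≤ t := by simpa [Nat.lt_succ_iff] using hj
    have h4 : 2*t - 2*j = 2*(t-j) := by omega
    rw [h4, coeff_Dbl_even, coeff_Dbl_even]
  · subst htm
    rw [coeff_Dbl_odd _ (by omega)]
    symm
    apply Finset.sum_eq_zero
    intro k hk
    have hk' : k ≤ 2*t+1 := by simpa [Nat.lt_succ_iff] using hk
    rcases Nat.even_or_odd k with ⟨u, hu⟩ | ⟨u, hu⟩
    · have : ¬ 2 ∣ (2*t+1-k) := by omega
      rw [coeff_Dbl_odd G this]; ring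
    · rw [coeff_Dbl_odd F (by omega)]; ring

lemma Dbl_add (F G : PS) : Dbl (F + G) = Dbl F + Dbl G := by
  ext m
  by_cases h : 2 ∣ m <;> simp [Dbl, coeff_mk, h]

lemma Dbl_one : Dbl 1 = 1 := by
  ext m
  rcases Nat.eq_zero_or_pos m with rfl | hm
  · simp [Dbl, coeff_mk]
  · have h2 : m / 2 = 0 ↔ m < 2 := by rw [Nat.div_eq_zero_iff]; omega
    by_cases h : 2 ∣ m <;>
      simp [Dbl, coeff_mk, h, PowerSeries.coeff_one] <;> omega

lemma Dbl_Xpow (j : ℕ) : Dbl ((X:PS)^j) = (X:PS)^(2*j) := by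
  ext m
  by_cases h : 2 ∣ m
  · obtain ⟨t, rfl⟩ := h
    rw [coeff_Dbl_even, PowerSeries.coeff_X_pow, PowerSeries.coeff_X_pow]
    by_cases ht : t = j
    · simp [ht]
    · have ht2 : ¬ 2*t = 2*j := by omega
      simp [ht, ht2]
  · rw [coeff_Dbl_odd _ h, PowerSeries.coeff_X_pow]
    have : ¬ m = 2*j := by omega
    simp [this]

lemma Dbl_one_sub_Xpow (j : ℕ) : Dbl (1 - (X:PS)^j) = 1 - (X:PS)^(2*j) := by
  have h : (1 : PS) - (X:PS)^j + (X:PS)^j = 1 := by ring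
  have := congrArg Dbl h
  rw [Dbl_add, Dbl_one, Dbl_Xpow] at this
  linear_combination this

lemma Dbl_pp (k M : ℕ) : Dbl (pp k M) = pp (2*k) M := by
  induction M with
  | zero => simp [pp, Dbl_one]
  | succ M ih =>
      rw [pp_succ, Dbl_mul, ih, Dbl_one_sub_Xpow, pp_succ]
      have : 2*(k*(M+1)) = 2*k*(M+1) := by ring
      rw [this]

lemma Dbl_fk {k : ℕ} (hk : 1 ≤ k) : Dbl (fk k) = fk (2*k) := by
  ext m
  by_cases h : 2 ∣ m
  · obtain ⟨t, rfl⟩ := h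
    rw [coeff_Dbl_even, coeff_fk, coeff_fk, ← Dbl_pp, coeff_Dbl_even]
    have h1 : Emod t (pp k (2*t+1)) (pp k (t+1)) := pp_stable hk (by omega)
    exact (emod_iff.1 h1 t le_rfl).symm
  · rw [coeff_Dbl_odd _ h, coeff_fk, ← Dbl_pp, coeff_Dbl_odd _ h]

lemma constantCoeff_pp {k M : ℕ} (hk : 1 ≤ k) : constantCoeff (pp k M) = 1 := by
  rw [pp, map_prod]
  refine Finset.prod_eq_one ?_
  intro m hm
  have hm1 : 1 ≤ m := (Finset.mem_Ioc.1 hm).1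
  have : k * m ≠ 0 := by positivity
  rw [map_sub, map_one, map_pow, constantCoeff_X, zero_pow this, sub_zero]

lemma pp_ne_zero {k M : ℕ} (hk : 1 ≤ k) : pp k M ≠ 0 := by
  intro h
  have := constantCoeff_pp (M := M) hk
  rw [h, map_zero] at this
  exact zero_ne_one this

lemma pp_zero (k : ℕ) : pp k 0 = 1 := by simp [pp]

/-- Gaussian binomial coefficients, base q = X^2 -/
noncomputable def gb : ℕ → ℕ → PS
  | _, 0 => 1
  | 0, _+1 => 0
  | n+1, k+1 => gb n (k+1) + (X:PS)^(2*(n-k)) * gb n k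

lemma gb_zero_right (n : ℕ) : gb n 0 = 1 := by cases n <;> rfl

lemma gb_succ (n k : ℕ) :
    gb (n+1) (k+1) = gb n (k+1) + (X:PS)^(2*(n-k)) * gb n k := rfl

lemma gb_eq_zero : ∀ {n k : ℕ}, n < k → gb n k = 0 := by
  intro n
  induction n with
  | zero => intro k hk; match k, hk with | k+1, _ => rfl
  | succ n ih =>
      intro k hk
      match k, hk with
      | k+1, hk =>
        rw [gb_succ, ih (by omega), ih (by omega), mul_zero, add_zero]

lemma gb_diag (n : ℕ) : gb n n = 1 := by
  induction n with
  | zero => rfl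
  | succ n ih =>
      rw [gb_succ, gb_eq_zero (by omega), ih, Nat.sub_self]
      simp

lemma gb_mul_pq : ∀ n k : ℕ, k ≤ n → gb n k * (pp 2 k * pp 2 (n-k)) = pp 2 n := by
  intro n
  induction n with
  | zero =>
      intro k hk
      interval_cases k
      rw [gb_zero_right, pp_zero]
      simp
  | succ n ih =>
      intro k hk
      match k with
      | 0 =>
          rw [gb_zero_right, pp_zero, Nat.sub_zero]
          simp
      | k'+1 =>
          by_cases hkn : k'+1 ≤ n
          · have A := ih (k'+1) hkn
            have B := ih k' (by omega)
            have e2 : pp 2 (k'+1) = pp 2 k' * (1 - (X:PS)^(2*(k'+1))) := pp_succ 2 k'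
            have e1 : pp 2 (n-k') = pp 2 (n-(k'+1)) * (1 - (X:PS)^(2*(n-k'))) := by
              rw [show n-k' = (n-(k'+1))+1 from by omega, pp_succ]
            rw [e2] at A
            rw [e1] at B
            rw [gb_succ, show n+1-(k'+1) = n-k' from by omega, e1, e2,
              pp_succ 2 n, show 2*(n+1) = 2*(n-k') + 2*(k'+1) from by omega, pow_add]
            linear_combination (1 - (X:PS)^(2*(n-k'))) * A
              + ((X:PS)^(2*(n-k')) * (1 - (X:PS)^(2*(k'+1)))) * B
          · have hk' : k' = n := by omega
            subst hk'
            rw [gb_diag, Nat.sub_self, pp_zero]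
            simp

lemma gb_ruleB (n k : ℕ) :
    gb (n+1) (k+1) = (X:PS)^(2*(k+1)) * gb n (k+1) + gb n k := by
  rcases lt_or_ge n (k+1) with h | h
  · rcases Nat.eq_or_lt_of_le (by omega : n ≤ k) with rfl | hlt
    · rw [gb_succ, gb_eq_zero (by omega), gb_diag, Nat.sub_self]
      simp
    · rw [gb_eq_zero (by omega), gb_eq_zero (by omega), gb_eq_zero (by omega)]
      simp
  · have A := gb_mul_pq n (k+1) h
    have B := gb_mul_pq n k (by omega)
    have e2 : pp 2 (k+1) = pp 2 k * (1 - (X:PS)^(2*(k+1))) := pp_succ 2 k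
    have e1 : pp 2 (n-k) = pp 2 (n-(k+1)) * (1 - (X:PS)^(2*(n-k))) := by
      rw [show n-k = (n-(k+1))+1 from by omega, pp_succ]
    rw [e2] at A
    rw [e1] at B
    have h0 : pp 2 k * pp 2 (n-(k+1)) ≠ 0 :=
      mul_ne_zero (pp_ne_zero (by norm_num)) (pp_ne_zero (by norm_num))
    have key : (1 - (X:PS)^(2*(k+1))) * gb n (k+1)
        = (1 - (X:PS)^(2*(n-k))) * gb n k := by
      apply mul_right_cancel₀ h0
      linear_combination A - B
    rw [gb_succ]
    linear_combination key

/-- squared distance exponent -/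
def sqd (a b : ℕ) : ℕ := (((a:ℤ) - b).natAbs)^2

lemma sqd_cast (a b : ℕ) : ((sqd a b : ℤ)) = ((a:ℤ)-b)^2 := by
  unfold sqd
  push_cast
  rw [_root_.sq, _root_.sq, abs_mul_abs_self]

lemma sqd_E1 {N j : ℕ} (hj : j ≤ 2*N+1) :
    sqd (j+1) (N+1) + 2*(2*N+1-j) = sqd j (N+1) + (2*N+1) := by
  zify [hj]
  rw [sqd_cast, sqd_cast]
  push_cast
  ring

lemma sqd_E2 (N j : ℕ) :
    sqd j (N+1) + 2*j = sqd (j+1) (N+1) + (2*N+1) := by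
  zify
  rw [sqd_cast, sqd_cast]
  push_cast
  ring

lemma sqd_E3 (N j : ℕ) : sqd (j+1) (N+1) = sqd j N := by
  zify
  rw [sqd_cast, sqd_cast]
  push_cast
  ring

/-- coefficient in the finite theta sum -/
noncomputable def cc (N k : ℕ) : PS := (-1)^(N+k) * (X:PS)^(sqd k N)

/-- finite Jacobi-type sum -/
noncomputable def Rr (N : ℕ) : PS := ∑ k ∈ range (2*N+1), cc N k * gb (2*N) k

lemma Rr_succ (N : ℕ) : Rr (N+1) = (1 - (X:PS)^(2*N+1))^2 * Rr N := by
  have claimA : ∀ j ≤ 2*N+1,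
      cc (N+1) j + cc (N+1) (j+1) * (X:PS)^(2*(2*N+1-j))
        = (1 - (X:PS)^(2*N+1)) * cc (N+1) j := by
    intro j hj
    unfold cc
    have hexp : (X:PS)^(sqd (j+1) (N+1)) * (X:PS)^(2*(2*N+1-j))
        = (X:PS)^(sqd j (N+1)) * (X:PS)^(2*N+1) := by
      rw [← pow_add, ← pow_add, sqd_E1 hj]
    have hsign : ((-1 : PS))^(N+1+(j+1)) = -(-1 : PS)^(N+1+j) := by
      rw [show N+1+(j+1) = (N+1+j)+1 from by omega, pow_succ]
      ring
    rw [hsign]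
    linear_combination (-((-1:PS))^(N+1+j)) * hexp
  have claimB : ∀ j : ℕ,
      cc (N+1) j * (X:PS)^(2*j) + cc (N+1) (j+1)
        = (1 - (X:PS)^(2*N+1)) * cc N j := by
    intro j
    unfold cc
    have hexp : (X:PS)^(sqd j (N+1)) * (X:PS)^(2*j)
        = (X:PS)^(sqd j N) * (X:PS)^(2*N+1) := by
      rw [← pow_add, ← pow_add, sqd_E2, sqd_E3]
    have hsign : ((-1 : PS))^(N+1+(j+1)) = (-1 : PS)^(N+j) := by
      rw [show N+1+(j+1) = (N+j)+2 from by omega, pow_add]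
      ring
    have he3 : sqd (j+1) (N+1) = sqd j N := sqd_E3 N j
    have hsign2 : ((-1 : PS))^(N+1+j) = -(-1 : PS)^(N+j) := by
      rw [show N+1+j = (N+j)+1 from by omega, pow_succ]
      ring
    rw [hsign, he3, hsign2]
    linear_combination (-((-1:PS))^(N+j)) * hexp
  -- step 1
  have hA : ∀ k, gb (2*(N+1)) k
      = gb (2*N+1) k
        + (Nat.casesOn k 0 (fun j => (X:PS)^(2*(2*N+1-j)) * gb (2*N+1) j) : PS) := by
    intro k
    cases k with
    | zero => rw [gb_zero_right, gb_zero_right]; simp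
    | succ j =>
        rw [show 2*(N+1) = (2*N+1)+1 from by omega, gb_succ]
  have step1 : Rr (N+1)
      = (1 - (X:PS)^(2*N+1)) * ∑ j ∈ range (2*N+2), cc (N+1) j * gb (2*N+1) j := by
    rw [Rr]
    calc ∑ k ∈ range (2*(N+1)+1), cc (N+1) k * gb (2*(N+1)) k
        = ∑ k ∈ range (2*N+3), (cc (N+1) k * gb (2*N+1) k
            + cc (N+1) k * (Nat.casesOn k 0 (fun j => (X:PS)^(2*(2*N+1-j)) * gb (2*N+1) j) : PS)) := by
          refine Finset.sum_congr (by rw [show 2*(N+1)+1 = 2*N+3 from by ring]) ?_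
          intro k _
          rw [hA k]
          ring
      _ = (∑ k ∈ range (2*N+3), cc (N+1) k * gb (2*N+1) k)
            + ∑ k ∈ range (2*N+3), cc (N+1) k * (Nat.casesOn k 0 (fun j => (X:PS)^(2*(2*N+1-j)) * gb (2*N+1) j) : PS) :=
          Finset.sum_add_distrib
      _ = (∑ k ∈ range (2*N+2), cc (N+1) k * gb (2*N+1) k)
            + ∑ j ∈ range (2*N+2), cc (N+1) (j+1) * ((X:PS)^(2*(2*N+1-j)) * gb (2*N+1) j) := by
          congr 1
          · rw [Finset.sum_range_succ, gb_eq_zero (show 2*N+1 < 2*N+2 from by omega),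
              mul_zero, add_zero]
          · rw [Finset.sum_range_succ']
            simp
      _ = ∑ j ∈ range (2*N+2),
            (cc (N+1) j + cc (N+1) (j+1) * (X:PS)^(2*(2*N+1-j))) * gb (2*N+1) j := by
          rw [← Finset.sum_add_distrib]
          refine Finset.sum_congr rfl ?_
          intro k _
          ring
      _ = ∑ j ∈ range (2*N+2),
            ((1 - (X:PS)^(2*N+1)) * cc (N+1) j) * gb (2*N+1) j := by
          refine Finset.sum_congr rfl ?_
          intro j hj
          rw [claimA j (by simpa [Nat.lt_succ_iff] using hj)]
      _ = (1 - (X:PS)^(2*N+1)) * ∑ j ∈ range (2*N+2), cc (N+1) j * gb (2*N+1) j := by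
          rw [Finset.mul_sum]
          refine Finset.sum_congr rfl ?_
          intro j _
          ring
  -- step 2
  have hB : ∀ k, gb (2*N+1) k
      = (X:PS)^(2*k) * gb (2*N) k
        + (Nat.casesOn k 0 (fun j => gb (2*N) j) : PS) := by
    intro k
    cases k with
    | zero => rw [gb_zero_right, gb_zero_right]; simp
    | succ j => exact gb_ruleB (2*N) j
  have step2 : ∑ j ∈ range (2*N+2), cc (N+1) j * gb (2*N+1) j
      = (1 - (X:PS)^(2*N+1)) * Rr N := by
    calc ∑ k ∈ range (2*N+2), cc (N+1) k * gb (2*N+1) k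
        = ∑ k ∈ range (2*N+2), (cc (N+1) k * ((X:PS)^(2*k) * gb (2*N) k)
            + cc (N+1) k * (Nat.casesOn k 0 (fun j => gb (2*N) j) : PS)) := by
          refine Finset.sum_congr rfl ?_
          intro k _
          rw [hB k]
          ring
      _ = (∑ k ∈ range (2*N+2), cc (N+1) k * ((X:PS)^(2*k) * gb (2*N) k))
            + ∑ k ∈ range (2*N+2), cc (N+1) k * (Nat.casesOn k 0 (fun j => gb (2*N) j) : PS) :=
          Finset.sum_add_distrib
      _ = (∑ k ∈ range (2*N+1), cc (N+1) k * ((X:PS)^(2*k) * gb (2*N) k))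
            + ∑ j ∈ range (2*N+1), cc (N+1) (j+1) * gb (2*N) j := by
          congr 1
          · rw [Finset.sum_range_succ, gb_eq_zero (show 2*N < 2*N+1 from by omega)]
            simp
          · rw [Finset.sum_range_succ']
            simp
      _ = ∑ j ∈ range (2*N+1),
            (cc (N+1) j * (X:PS)^(2*j) + cc (N+1) (j+1)) * gb (2*N) j := by
          rw [← Finset.sum_add_distrib]
          refine Finset.sum_congr rfl ?_
          intro k _
          ring
      _ = ∑ j ∈ range (2*N+1), ((1 - (X:PS)^(2*N+1)) * cc N j) * gb (2*N) j := by
          refine Finset.sum_congr rfl ?_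
          intro j _
          rw [claimB j]
      _ = (1 - (X:PS)^(2*N+1)) * Rr N := by
          rw [Rr, Finset.mul_sum]
          refine Finset.sum_congr rfl ?_
          intro j _
          ring
  rw [step1, step2]
  ring

/-- finite Gauss: square of the odd partial product equals `Rr` -/
lemma O_sq (N : ℕ) :
    (∏ m ∈ Ioc 0 N, (1 - (X:PS)^(2*m-1)))^2 = Rr N := by
  induction N with
  | zero =>
      simp [Rr, cc, sqd, gb_zero_right]
  | succ N ih =>
      rw [Finset.prod_Ioc_succ_top (Nat.zero_le N), Rr_succ, ← ih,
        show 2*(N+1)-1 = 2*N+1 from by omega]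
      ring

lemma pp1_split (N : ℕ) :
    pp 1 (2*N) = (∏ m ∈ Ioc 0 N, (1 - (X:PS)^(2*m-1))) * pp 2 N := by
  induction N with
  | zero => simp [pp]
  | succ N ih =>
      have h1 : pp 1 (2*(N+1)) = pp 1 (2*N) * (1 - (X:PS)^(2*N+1)) * (1 - (X:PS)^(2*N+2)) := by
        rw [show 2*(N+1) = (2*N+1)+1 from by ring, pp_succ, show (2*N+1) = (2*N)+1 from rfl,
          pp_succ, show 1*(2*N+1) = 2*N+1 from by ring, show 1*(2*N+1+1) = 2*N+2 from by ring]
      rw [h1, ih, Finset.prod_Ioc_succ_top (Nat.zero_le N), pp_succ,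
        show 2*(N+1)-1 = 2*N+1 from by omega, show 2*(N+1) = 2*N+2 from by ring]
      ring

lemma prod_Ioc_emod_one {t c : ℕ} (e : ℕ) (h : t + 1 ≤ 2*(c+1)) :
    Emod t (∏ m ∈ Ioc c e, (1 - (X:PS)^(2*m))) 1 := by
  induction e with
  | zero =>
      rw [show Ioc c 0 = ∅ from Finset.Ioc_eq_empty (by omega), Finset.prod_empty]
      exact Emod.refl _ _
  | succ e ih =>
      by_cases hce : c ≤ e
      · rw [Finset.prod_Ioc_succ_top hce]
        exact Emod.trans (emod_mul_one_sub _ (by omega)) ih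
      · rw [show Ioc c (e+1) = ∅ from Finset.Ioc_eq_empty (by omega), Finset.prod_empty]
        exact Emod.refl _ _

lemma gb_pq_emod {N k : ℕ} (hk : k ≤ 2*N) :
    Emod (2*(N - (((k:ℤ)-N).natAbs)) + 1) (gb (2*N) k * pp 2 N) 1 := by
  set d := (((k:ℤ)-N).natAbs) with hd
  have hdN : d ≤ N := by omega
  set u := ∏ m ∈ Ioc (N-d) N, (1 - (X:PS)^(2*m)) with hu
  set v := ∏ m ∈ Ioc (N+d) (2*N), (1 - (X:PS)^(2*m)) with hv
  have hN : pp 2 N = pp 2 (N-d) * u := by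
    rw [pp, pp, hu]
    exact (Finset.prod_Ioc_consecutive _ (Nat.zero_le _) (by omega)).symm
  have h2N : pp 2 (2*N) = pp 2 (N+d) * v := by
    rw [pp, pp, hv]
    exact (Finset.prod_Ioc_consecutive _ (Nat.zero_le _) (by omega)).symm
  have hsplit : pp 2 k * pp 2 (2*N-k) = pp 2 (N-d) * pp 2 (N+d) := by
    rcases le_total k N with h | h
    · rw [show N - d = k from by omega, show N + d = 2*N - k from by omega]
    · rw [show N - d = 2*N - k from by omega, show N + d = k from by omega]
      ring
  have hGP := gb_mul_pq (2*N) k hk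
  have heq : (gb (2*N) k * pp 2 N) * (pp 2 (N-d) * pp 2 (N+d))
      = (u * v) * (pp 2 (N-d) * pp 2 (N+d)) := by
    calc (gb (2*N) k * pp 2 N) * (pp 2 (N-d) * pp 2 (N+d))
        = gb (2*N) k * (pp 2 k * pp 2 (2*N-k)) * pp 2 N := by rw [← hsplit]; ring
      _ = pp 2 (2*N) * pp 2 N := by rw [hGP]
      _ = (pp 2 (N+d) * v) * (pp 2 (N-d) * u) := by rw [← h2N, ← hN]
      _ = (u * v) * (pp 2 (N-d) * pp 2 (N+d)) := by ring
  have hC : pp 2 (N-d) * pp 2 (N+d) ≠ 0 :=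
    mul_ne_zero (pp_ne_zero (by norm_num)) (pp_ne_zero (by norm_num))
  have hguv : gb (2*N) k * pp 2 N = u * v := mul_right_cancel₀ hC heq
  rw [hguv]
  have hu1 : Emod (2*(N-d)+1) u 1 := prod_Ioc_emod_one N (by omega)
  have hv1 : Emod (2*(N-d)+1) v 1 := prod_Ioc_emod_one (2*N) (by omega)
  have := Emod.mul hu1 hv1
  rwa [one_mul] at this

/-- coefficients of the theta series ∑_{j∈ℤ} (-1)^j q^(j^2) -/
def thetaC : ℕ → ℤ := fun m =>
  if m = 0 then 1 else if (Nat.sqrt m)^2 = m then 2 * (-1)^(Nat.sqrt m) else 0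

noncomputable def Theta : PS := PowerSeries.mk thetaC

lemma negpow_parity {a b : ℕ} (h : a % 2 = b % 2) : ((-1 : ℤ))^a = (-1 : ℤ)^b := by
  rcases Nat.even_or_odd a with ha | ha
  · have hb : Even b := by
      rcases Nat.even_or_odd b with hb | hb
      · exact hb
      · exfalso; rcases ha with ⟨x, hx⟩; rcases hb with ⟨y, hy⟩; omega
    rw [Even.neg_one_pow ha, Even.neg_one_pow hb]
  · have hb : Odd b := by
      rcases Nat.even_or_odd b with hb | hb
      · exfalso; rcases ha with ⟨x, hx⟩; rcases hb with ⟨y, hy⟩; omega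
      · exact hb
    rw [Odd.neg_one_pow ha, Odd.neg_one_pow hb]

lemma coeff_cc (N k m : ℕ) :
    coeff m (cc N k) = if m = sqd k N then (-1 : ℤ)^(N+k) else 0 := by
  have hC : ((-1 : PS))^(N+k) = C ((-1 : ℤ)^(N+k)) := by
    rw [map_pow, map_neg, map_one]
  rw [cc, hC, coeff_C_mul, PowerSeries.coeff_X_pow]
  by_cases h : m = sqd k N <;> simp [h]

lemma theta_emod {n N : ℕ} (hN : n ≤ N) :
    Emod n (∑ k ∈ range (2*N+1), cc N k) Theta := by
  rw [emod_iff]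
  intro m hm
  rw [map_sum]
  have hrw : ∀ k ∈ range (2*N+1),
      coeff m (cc N k) = if m = sqd k N then (-1 : ℤ)^(N+k) else 0 :=
    fun k _ => coeff_cc N k m
  rw [Finset.sum_congr rfl hrw, Theta, coeff_mk]
  by_cases hsq : (Nat.sqrt m)^2 = m
  · rcases Nat.eq_zero_or_pos (Nat.sqrt m) with hs0 | hs1
    · have hm0 : m = 0 := by rw [← hsq, hs0]; ring
      subst hm0
      have hz : ∀ b ∈ range (2*N+1), b ≠ N →
          (if 0 = sqd b N then ((-1 : ℤ))^(N+b) else 0) = 0 := by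
        intro b _ hbN
        rw [if_neg]
        unfold sqd
        intro hcon
        have h0 : (((b:ℤ) - N).natAbs)^2 = 0 := hcon.symm
        have h1 : (((b:ℤ) - N).natAbs) = 0 := (Nat.pow_eq_zero.mp h0).1
        omega
      rw [Finset.sum_eq_single_of_mem N (Finset.mem_range.mpr (by omega)) hz]
      have hdiag : (0:ℕ) = sqd N N := by unfold sqd; rw [sub_self]; simp
      rw [if_pos hdiag, Even.neg_one_pow (⟨N, rfl⟩ : Even (N+N))]
      simp [thetaC]
    · set s := Nat.sqrt m with hs
      have hsm : s ≤ m := by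
        conv_rhs => rw [← hsq]
        exact Nat.le_self_pow two_ne_zero s
      have hm0 : m ≠ 0 := by omega
      have hsN : s ≤ N := by omega
      have hpair : ({N-s, N+s} : Finset ℕ) ⊆ range (2*N+1) := by
        intro x hx
        rw [Finset.mem_insert, Finset.mem_singleton] at hx
        rw [Finset.mem_range]
        rcases hx with rfl | rfl <;> omega
      rw [← Finset.sum_subset hpair]
      · have hne : N - s ≠ N + s := by omega
        rw [Finset.sum_pair hne]
        have e1 : m = sqd (N-s) N := by
          unfold sqd
          rw [show ((((N-s : ℕ) :ℤ)) - (N:ℤ)).natAbs = s from by omega, hsq]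
        have e2 : m = sqd (N+s) N := by
          unfold sqd
          rw [show ((((N+s : ℕ) :ℤ)) - (N:ℤ)).natAbs = s from by omega, hsq]
        rw [if_pos e1, if_pos e2]
        have p1 : ((-1 : ℤ))^(N+(N-s)) = (-1 : ℤ)^s := negpow_parity (by omega)
        have p2 : ((-1 : ℤ))^(N+(N+s)) = (-1 : ℤ)^s := negpow_parity (by omega)
        rw [p1, p2]
        simp only [thetaC]
        rw [if_neg hm0, if_pos hsq]
        ring
      · intro b hb hbn
        rw [if_neg]
        intro hcon
        have habs : (((b:ℤ) - N).natAbs)^2 = s^2 := by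
          rw [hsq, hcon]
          unfold sqd
          rfl
        have heq : (((b:ℤ) - N).natAbs) = s :=
          Nat.pow_left_injective (by norm_num) habs
        rw [Finset.mem_insert, Finset.mem_singleton] at hbn
        omega
  · have hm0 : m ≠ 0 := by
      intro h
      apply hsq
      subst h
      simp
    have hz : ∑ k ∈ range (2*N+1), (if m = sqd k N then ((-1:ℤ))^(N+k) else 0) = 0 := by
      refine Finset.sum_eq_zero ?_
      intro b _
      rw [if_neg]
      intro hcon
      apply hsq
      have hma : m = (((b:ℤ) - N).natAbs) * (((b:ℤ) - N).natAbs) := by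
        rw [hcon]
        unfold sqd
        ring
      rw [hma, Nat.sqrt_eq]
      ring
    rw [hz]
    simp only [thetaC]
    rw [if_neg hm0, if_neg hsq]

lemma rr_pq_emod (n : ℕ) :
    Emod n (Rr (n+1) * pp 2 (n+1)) Theta := by
  set N := n+1 with hNdef
  have hterm : ∀ k ∈ range (2*N+1),
      Emod n ((cc N k * gb (2*N) k) * pp 2 N) (cc N k) := by
    intro k hk
    have hk2N : k ≤ 2*N := by rw [Finset.mem_range] at hk; omega
    set d := (((k:ℤ)-N).natAbs) with hd
    have hdN : d ≤ N := by omega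
    have hdd : sqd k N = d^2 := rfl
    by_cases he : sqd k N ≤ n
    · have hgb : Emod (2*(N - d) + 1) (gb (2*N) k * pp 2 N) 1 := gb_pq_emod hk2N
      have he' : d^2 ≤ n := by rw [← hdd]; exact he
      have hlev : n - sqd k N ≤ 2*(N-d)+1 := by
        rw [hdd, hNdef]
        have hdN' : d ≤ n + 1 := hdN
        zify [he', hdN']
        nlinarith [sq_nonneg ((d:ℤ) - 1)]
      have hgb' : Emod (n - sqd k N) (gb (2*N) k * pp 2 N) 1 := hgb.of_le hlev
      have hx : Emod n ((X:PS)^(sqd k N) * (gb (2*N) k * pp 2 N)) ((X:PS)^(sqd k N) * 1) :=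
        hgb'.xpow_mul (by omega)
      have hfin := hx.const_mul ((-1 : PS)^(N+k))
      have hre1 : (cc N k * gb (2*N) k) * pp 2 N
          = (-1 : PS)^(N+k) * ((X:PS)^(sqd k N) * (gb (2*N) k * pp 2 N)) := by
        rw [cc]; ring
      have hre2 : cc N k = (-1 : PS)^(N+k) * ((X:PS)^(sqd k N) * 1) := by
        rw [cc]; ring
      rw [hre1, hre2]
      exact hfin
    · refine emod_of_xpow_dvd ?_ ?_
      · have h1 : (X:PS)^(n+1) ∣ (X:PS)^(sqd k N) := pow_dvd_pow _ (by omega)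
        have : (cc N k * gb (2*N) k) * pp 2 N
            = (X:PS)^(sqd k N) * ((-1 : PS)^(N+k) * gb (2*N) k * pp 2 N) := by
          rw [cc]; ring
        rw [this]
        exact Dvd.dvd.mul_right h1 _
      · have h1 : (X:PS)^(n+1) ∣ (X:PS)^(sqd k N) := pow_dvd_pow _ (by omega)
        have : cc N k = (X:PS)^(sqd k N) * (-1 : PS)^(N+k) := by rw [cc]; ring
        rw [this]
        exact Dvd.dvd.mul_right h1 _
  have hsum := Emod.sum hterm
  rw [← Finset.sum_mul] at hsum
  rw [show (∑ k ∈ range (2*N+1), cc N k * gb (2*N) k) = Rr N from rfl] at hsum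
  exact hsum.trans (theta_emod (by omega))

/-- Gauss's identity: f₁² = f₂ · θ(-q) -/
theorem gauss : (fk 1)^2 = fk 2 * Theta := by
  ext n
  have h1 : Emod n (fk 1) (pp 1 (2*(n+1))) := fk_emod le_rfl (by omega)
  have h2 : Emod n ((fk 1)^2) (pp 1 (2*(n+1)) ^ 2) := by
    rw [pow_two, pow_two]
    exact h1.mul h1
  have h3 : pp 1 (2*(n+1)) ^ 2 = (Rr (n+1) * pp 2 (n+1)) * pp 2 (n+1) := by
    rw [pp1_split, ← O_sq]
    ring
  rw [h3] at h2
  have h4 : Emod n ((Rr (n+1) * pp 2 (n+1)) * pp 2 (n+1)) (Theta * pp 2 (n+1)) :=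
    (rr_pq_emod n).mul (Emod.refl n _)
  have h5 : Emod n (fk 2) (pp 2 (n+1)) := fk_emod (by norm_num) (by omega)
  have h6 : Emod n (Theta * pp 2 (n+1)) (Theta * fk 2) :=
    (Emod.refl n Theta).mul h5.symm
  have hfinal : Emod n ((fk 1)^2) (fk 2 * Theta) := by
    have := (h2.trans h4).trans h6
    rwa [mul_comm Theta (fk 2)] at this
  exact emod_iff.1 hfinal n le_rfl

/-- doubled Gauss identity: f₂² = f₄ · θ(-q²) -/
theorem gauss2 : (fk 2)^2 = fk 4 * Dbl Theta := by
  have h := congrArg Dbl gauss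
  rw [pow_two, Dbl_mul, Dbl_mul, ← pow_two, Dbl_fk le_rfl] at h
  have h2 : Dbl (fk 2) = fk 4 := by
    rw [Dbl_fk (by norm_num)]
  rw [show (2*1 : ℕ) = 2 from rfl] at h
  rw [h, h2]

lemma notsq (α : ℕ) : ∀ n k : ℕ, k^2 ≠ 2^α*(4*n+3) ∧ 2*k^2 ≠ 2^α*(4*n+3) := by
  induction α with
  | zero =>
      intro n k
      simp only [pow_zero, one_mul]
      constructor
      · intro h
        rcases Nat.even_or_odd k with ⟨t, rfl⟩ | ⟨t, rfl⟩
        · obtain ⟨u, hu⟩ : ∃ u, (t+t)^2 = 4*u := ⟨t*t, by ring⟩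
          rw [hu] at h
          omega
        · obtain ⟨u, hu⟩ : ∃ u, (2*t+1)^2 = 4*u+1 := ⟨t*t+t, by ring⟩
          rw [hu] at h
          omega
      · intro h
        obtain ⟨u, hu⟩ : ∃ u, 2*k^2 = 2*u := ⟨k*k, by ring⟩
        rw [hu] at h
        omega
  | succ α ih =>
      intro n k
      have hW : 2^(α+1)*(4*n+3) = 2*(2^α*(4*n+3)) := by rw [pow_succ]; ring
      constructor
      · intro h
        rw [hW] at h
        rcases Nat.even_or_odd k with ⟨t, rfl⟩ | ⟨t, rfl⟩
        · apply (ih n t).2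
          obtain ⟨u, hu⟩ : ∃ u, (t+t)^2 = 2*(2*u) ∧ 2*t^2 = 2*u := ⟨t*t, by constructor <;> ring⟩
          rw [hu.1] at h
          rw [hu.2]
          omega
        · obtain ⟨u, hu⟩ : ∃ u, (2*t+1)^2 = 2*u+1 := ⟨2*t*t+2*t, by ring⟩
          rw [hu] at h
          omega
      · intro h
        rw [hW] at h
        apply (ih n k).1
        omega

lemma thetaC_even (j : ℕ) (hj : j ≠ 0) : (2:ℤ) ∣ thetaC j := by
  unfold thetaC
  rw [if_neg hj]
  by_cases h : (Nat.sqrt j)^2 = j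
  · rw [if_pos h]
    exact dvd_mul_right 2 _
  · rw [if_neg h]
    exact dvd_zero 2

lemma thetaC_target (α n : ℕ) : thetaC (2^α*(4*n+3)) = 0 := by
  have hm0 : 2^α*(4*n+3) ≠ 0 := by positivity
  unfold thetaC
  rw [if_neg hm0, if_neg]
  intro h
  exact (notsq α n (Nat.sqrt _)).1 h

lemma coeff_DTheta_two (j : ℕ) (hj : j ≠ 0) : (2:ℤ) ∣ coeff j (Dbl Theta) := by
  rw [Dbl, coeff_mk]
  by_cases h : 2 ∣ j
  · rw [if_pos h, Theta, coeff_mk]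
    exact thetaC_even _ (by omega)
  · rw [if_neg h]
    exact dvd_zero 2

lemma coeff_DTheta_target (α n : ℕ) : coeff (2^α*(4*n+3)) (Dbl Theta) = 0 := by
  rw [Dbl, coeff_mk]
  by_cases h : 2 ∣ 2^α*(4*n+3)
  · rw [if_pos h, Theta, coeff_mk]
    match α with
    | 0 =>
        exfalso
        rw [pow_zero, one_mul] at h
        omega
    | β+1 =>
        have h1 : 2^(β+1)*(4*n+3) = 2*(2^β*(4*n+3)) := by rw [pow_succ]; ring
        rw [h1, Nat.mul_div_cancel_left _ (by norm_num : 0 < 2)]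
        exact thetaC_target β n
  · rw [if_neg h]

lemma four_dvd_G (α n : ℕ) :
    (4:ℤ) ∣ coeff (2^α*(4*n+3)) (Theta * Dbl Theta) := by
  rw [coeff_mul]
  refine Finset.dvd_sum ?_
  rintro ⟨p, q⟩ hpq
  rw [Finset.HasAntidiagonal.mem_antidiagonal] at hpq
  dsimp only
  by_cases hp : p = 0
  · have hq : q = 2^α*(4*n+3) := by omega
    rw [hq, coeff_DTheta_target, mul_zero]
    exact dvd_zero 4
  · by_cases hq : q = 0
    · have hp' : p = 2^α*(4*n+3) := by omega
      rw [hp', Theta, coeff_mk, thetaC_target, zero_mul]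
      exact dvd_zero 4
    · have h1 : (2:ℤ) ∣ coeff p Theta := by
        rw [Theta, coeff_mk]
        exact thetaC_even p hp
      have h2 := coeff_DTheta_two q hq
      have := mul_dvd_mul h1 h2
      rwa [show ((2:ℤ)*2) = 4 from by norm_num] at this

noncomputable def Asm : PS := PowerSeries.mk fun m =>
  if m = 0 then 0 else if (Nat.sqrt m)^2 = m then (-1 : ℤ)^(Nat.sqrt m) else 0

lemma Theta_eq : Theta = 1 + C (2:ℤ) * Asm := by
  ext m
  rw [Theta, coeff_mk, map_add, coeff_C_mul, Asm, coeff_mk]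
  by_cases h : m = 0
  · subst h
    simp [thetaC]
  · rw [PowerSeries.coeff_one, if_neg h]
    unfold thetaC
    rw [if_neg h, if_neg h]
    by_cases h2 : (Nat.sqrt m)^2 = m <;> simp [h2]

lemma Dbl_C_mul (c : ℤ) (F : PS) : Dbl (C c * F) = C c * Dbl F := by
  ext m
  rw [coeff_C_mul, Dbl, Dbl, coeff_mk, coeff_mk, coeff_C_mul]
  by_cases h : 2 ∣ m
  · rw [if_pos h, if_pos h]
  · rw [if_neg h, if_neg h, mul_zero]

lemma DTheta_eq : Dbl Theta = 1 + C (2:ℤ) * Dbl Asm := by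
  rw [Theta_eq, Dbl_add, Dbl_one, Dbl_C_mul]

abbrev S4 := PowerSeries (ZMod 4)

noncomputable def toS4 : PS →+* S4 := PowerSeries.map (Int.castRingHom (ZMod 4))

lemma sq_one_mod4 (B : PS) : toS4 ((1 + C (2:ℤ) * B)^2) = 1 := by
  rw [map_pow, map_add, map_one, map_mul]
  have hC : toS4 (C (2:ℤ)) = C (2 : ZMod 4) := by
    rw [toS4, PowerSeries.map_C]
    norm_num
  rw [hC]
  set b := toS4 B
  have htwo : (C (2 : ZMod 4)) = (2 : S4) := map_ofNat (C (R := ZMod 4)) 2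
  have h4 : (C (2 : ZMod 4)) * (C (2 : ZMod 4)) = 0 := by
    rw [← map_mul]
    have : ((2:ZMod 4) * 2) = 0 := by decide
    rw [this, map_zero]
  have h2' : (2 : S4) * (C (2 : ZMod 4)) = 0 := by rw [← htwo]; exact h4
  linear_combination (b : S4) * h2' + (b*b) * h4

lemma T_sq : (toS4 Theta)^2 = 1 := by
  rw [← map_pow, Theta_eq]
  exact sq_one_mod4 Asm

lemma DT_sq : (toS4 (Dbl Theta))^2 = 1 := by
  rw [← map_pow, DTheta_eq]
  exact sq_one_mod4 (Dbl Asm)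

lemma const_fk {k : ℕ} (hk : 1 ≤ k) : constantCoeff (fk k) = 1 := by
  rw [← coeff_zero_eq_constantCoeff, coeff_fk, coeff_zero_eq_constantCoeff]
  exact constantCoeff_pp hk

lemma isUnit_S4_fk {k : ℕ} (hk : 1 ≤ k) : IsUnit (toS4 (fk k)) := by
  rw [PowerSeries.isUnit_iff_constantCoeff]
  have h : constantCoeff (toS4 (fk k)) = 1 := by
    rw [← coeff_zero_eq_constantCoeff, toS4, coeff_map, coeff_zero_eq_constantCoeff,
      const_fk hk]
    norm_num
  rw [h]
  exact isUnit_one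

end OC

/-- `a : ℕ → ℕ` is the generalized overcubic partition function `ā_c`, i.e.
`(∑_{n≥0} ā_c(n) q^n) · f_1^2 · f_2^{2c} = f_2^3 · f_4^{c-1}` in `ℤ[[q]]`
(equivalently `∑_{n≥0} ā_c(n) q^n = f_4^{c-1}/(f_1^2 f_2^{2c-3})`). -/
def IsGenOvercubic (c : ℕ) (a : ℕ → ℕ) : Prop :=
  (PowerSeries.mk fun n => (a n : ℤ)) * (fk 1) ^ 2 * (fk 2) ^ (2 * c) =
    (fk 2) ^ 3 * (fk 4) ^ (c - 1)

theorem stmt_8 (i : ℕ) (hi : 1 ≤ i) (ab : ℕ → ℕ) (hab : IsGenOvercubic (2 * i) ab)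
    (n α : ℕ) :
    ab (2 ^ α * (4 * n + 3)) % 4 = 0 := by
  classical
  unfold IsGenOvercubic at hab
  set m := 2 ^ α * (4 * n + 3) with hm
  have h4 := congrArg (⇑OC.toS4) hab
  simp only [map_mul, map_pow] at h4
  set P := OC.toS4 (PowerSeries.mk fun n => (ab n : ℤ)) with hP
  set F1 := OC.toS4 (fk 1) with hF1
  set F2 := OC.toS4 (fk 2) with hF2
  set F4 := OC.toS4 (fk 4) with hF4
  set T := OC.toS4 OC.Theta with hT
  set T2 := OC.toS4 (OC.Dbl OC.Theta) with hT2
  have hg1 : F1^2 = F2 * T := by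
    rw [hF1, hF2, hT, ← map_pow, OC.gauss, map_mul]
  have hg2 : F2^2 = F4 * T2 := by
    rw [hF2, hF4, hT2, ← map_pow, OC.gauss2, map_mul]
  have hT2sq : T2^2 = 1 := OC.DT_sq
  have hTsq : T^2 = 1 := OC.T_sq
  have e1 : F2^(2*(2*i)) = F4^(2*i) := by
    rw [pow_mul F2 2 (2*i), hg2, mul_pow, pow_mul T2 2 i, hT2sq, one_pow, mul_one]
  have e2 : F4 * F4^(2*i-1) = F4^(2*i) := by
    rw [← pow_succ']
    congr 1
    omega
  rw [hg1, e1] at h4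
  have hmain : (F2 * F4^(2*i)) * (P * T) = (F2 * F4^(2*i)) * T2 := by
    linear_combination h4 + (F2 * F4^(2*i-1)) * hg2 + (F2*T2) * e2
  have hunit : IsUnit (F2 * F4^(2*i)) :=
    (OC.isUnit_S4_fk (by norm_num)).mul ((OC.isUnit_S4_fk (by norm_num)).pow _)
  have hPT : P * T = T2 := hunit.mul_left_cancel hmain
  have hTT : T * T = 1 := by rw [← pow_two]; exact hTsq
  have hPfinal : P = OC.toS4 (OC.Theta * OC.Dbl OC.Theta) := by
    rw [map_mul, ← hT, ← hT2]
    calc P = P * (T * T) := by rw [hTT, mul_one]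
      _ = (P * T) * T := by ring
      _ = T2 * T := by rw [hPT]
      _ = T * T2 := by ring
  have hc := congrArg (PowerSeries.coeff m) hPfinal
  rw [hP, OC.toS4, PowerSeries.coeff_map, PowerSeries.coeff_map, PowerSeries.coeff_mk] at hc
  have h0 : (((PowerSeries.coeff m (OC.Theta * OC.Dbl OC.Theta)) : ℤ) : ZMod 4) = 0 := by
    have hd := OC.four_dvd_G α n
    rw [← hm] at hd
    exact (ZMod.intCast_zmod_eq_zero_iff_dvd _ 4).mpr (by exact_mod_cast hd)
  simp only [Int.coe_castRingHom] at hc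
  rw [h0] at hc
  rw [Int.cast_natCast] at hc
  have hdvd : 4 ∣ ab m := (ZMod.natCast_eq_zero_iff _ 4).mp hc
  omega
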